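/- For every $x \in \mathbb{S}^m$, the function $z \mapsto \arccos\langle x, \exp_\mu(z) \rangle^2$ is differentiable at every $z \in \mathbb{R}^m$ with $\|z\| < \pi$ and $\exp_\mu(z) \neq -x$, and its gradient $\mathrm{grad}_z\, \arccos\langle x, \exp_\mu(z) \rangle^2 = -2\, \frac{\mathrm{grad}_z \langle x, \exp_\mu(z)\rangle}{\sqrt{1 - \langle x, \exp_\mu(z)\rangle^2}}\, \arccos\langle x, \exp_\mu(z)\rangle$ is bounded on this domain, with bounded directional limits as $z \to \exp_\mu^{-1}(-x)$ and as $\|z\| \to \pi$; in particular there is a constant $C < \infty$ with $\|\mathrm{grad}_z\, \arccos\langle x, \exp_\mu(z)\rangle^2\| \le C$ for all such $z$. -/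

import Mathlib

open MeasureTheory Real Filter
open scoped RealInnerProductSpace BoundedContinuousFunction

noncomputable section

/-- `v k = 2 π^{(k+1)/2} / Γ((k+1)/2)`, the surface volume of the unit sphere `S^k`. -/
def sphereVol (k : ℕ) : ℝ :=
  2 * Real.pi ^ ((k + 1 : ℝ) / 2) / Real.Gamma ((k + 1 : ℝ) / 2)

/-- `γ_m = v_{m+1} / (2 v_m)`. -/
def gammaC (m : ℕ) : ℝ := sphereVol (m + 1) / (2 * sphereVol m)

/-- The north pole `μ = e₂ = (0,1,0,…,0)ᵀ ∈ S^m ⊆ ℝ^{m+1}`. -/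
def northPole (m : ℕ) : EuclideanSpace ℝ (Fin (m + 1)) := EuclideanSpace.single 1 1

/-- The lower half sphere `L^m = {q ∈ S^m : q₂ ≤ 0}`. -/
def lowerHalf (m : ℕ) : Set (EuclideanSpace ℝ (Fin (m + 1))) :=
  {q | ‖q‖ = 1 ∧ q 1 ≤ 0}

/-- The distribution `α·Unif(L^m) + (1-α)·δ_μ`, where `Unif(L^m)` is the normalized
`m`-dimensional Hausdorff (surface) measure on the lower half sphere. -/
def PX (m : ℕ) (α : ℝ) : Measure (EuclideanSpace ℝ (Fin (m + 1))) :=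
  ENNReal.ofReal α •
      ((μH[(m : ℝ)] (lowerHalf m))⁻¹ • (μH[(m : ℝ)]).restrict (lowerHalf m)) +
    ENNReal.ofReal (1 - α) • Measure.dirac (northPole m)

/-- The Fréchet function `F̃(p) = E[arccos⟨p, X⟩²]`. -/
def Ftilde (m : ℕ) (α : ℝ) (p : EuclideanSpace ℝ (Fin (m + 1))) : ℝ :=
  ∫ q, Real.arccos ⟪p, q⟫ ^ 2 ∂(PX m α)

/-- `ι : ℝ^m → ℝ^{m+1}`, `(x₁,…,x_m) ↦ (x₁, 0, x₂, …, x_m)ᵀ`, identifying `ℝ^m` with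
the tangent space of `S^m` at the north pole. -/
def iota (m : ℕ) (x : EuclideanSpace ℝ (Fin m)) : EuclideanSpace ℝ (Fin (m + 1)) :=
  WithLp.toLp 2 (Fin.insertNth 1 0 x)

/-- The exponential map of `S^m` at the north pole `μ`:
`exp_μ(x) = cos(‖x‖) μ + sin(‖x‖) ι(x)/‖x‖`. -/
def expMu (m : ℕ) (x : EuclideanSpace ℝ (Fin m)) : EuclideanSpace ℝ (Fin (m + 1)) :=
  Real.cos ‖x‖ • northPole m + (Real.sin ‖x‖ / ‖x‖) • iota m x

/-- Removing the second coordinate, the left inverse of `ι`. -/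
def iotaInv (m : ℕ) (q : EuclideanSpace ℝ (Fin (m + 1))) : EuclideanSpace ℝ (Fin m) :=
  WithLp.toLp 2 (fun j => q ((1 : Fin (m + 1)).succAbove j))

/-- The inverse `exp_μ⁻¹ : S^m \ {-μ} → {x : ‖x‖ < π}` of the exponential map. -/
def expMuInv (m : ℕ) (p : EuclideanSpace ℝ (Fin (m + 1))) : EuclideanSpace ℝ (Fin m) :=
  (Real.arccos ⟪p, northPole m⟫ / ‖p - ⟪p, northPole m⟫ • northPole m‖) •
    iotaInv m (p - ⟪p, northPole m⟫ • northPole m)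

/-- The cube `[-π/2, π/2]^{m-1}`. -/
def cube (m : ℕ) : Set (Fin (m - 1) → ℝ) :=
  Set.univ.pi fun _ => Set.Icc (-(Real.pi / 2)) (Real.pi / 2)

/-- `g(θ) = ∏_{j=1}^{m-1} cos^{m-j} θⱼ`. -/
def gFun (m : ℕ) (θ : Fin (m - 1) → ℝ) : ℝ :=
  ∏ j, Real.cos (θ j) ^ (m - 1 - (j : ℕ))

/-- `h(θ) = ∏_{j=1}^{m-1} cos θⱼ`. -/
def hFun (m : ℕ) (θ : Fin (m - 1) → ℝ) : ℝ := ∏ j, Real.cos (θ j)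

end


noncomputable section AuxStmt13

namespace Stmt13Aux

open Real

variable {m : ℕ}

lemma iotaInv_iota (z : EuclideanSpace ℝ (Fin m)) : iotaInv m (iota m z) = z := by
  ext j
  simp [iotaInv, iota, Fin.insertNth_apply_succAbove]

lemma inner_iota (y : EuclideanSpace ℝ (Fin (m + 1))) (z : EuclideanSpace ℝ (Fin m)) :
    ⟪y, iota m z⟫ = ⟪iotaInv m y, z⟫ := by
  simp only [PiLp.inner_apply, RCLike.inner_apply, conj_trivial]
  rw [Fin.sum_univ_succAbove (fun i => iota m z i * y i) 1]
  simp [iota, iotaInv, Fin.insertNth_apply_succAbove]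

lemma norm_northPole : ‖northPole m‖ = 1 := by
  simp [northPole]

lemma inner_self_split (y : EuclideanSpace ℝ (Fin (m + 1))) :
    ⟪y, y⟫ = y 1 * y 1 + ⟪iotaInv m y, iotaInv m y⟫ := by
  simp only [PiLp.inner_apply, RCLike.inner_apply, conj_trivial]
  rw [Fin.sum_univ_succAbove (fun i => y i * y i) 1]
  simp [iotaInv]

lemma norm_iotaInv_le (y : EuclideanSpace ℝ (Fin (m + 1))) : ‖iotaInv m y‖ ≤ ‖y‖ := by
  have h := inner_self_split y
  rw [real_inner_self_eq_norm_sq, real_inner_self_eq_norm_sq] at h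
  nlinarith [norm_nonneg (iotaInv m y), norm_nonneg y, mul_self_nonneg (y 1)]

lemma norm_iota (z : EuclideanSpace ℝ (Fin m)) : ‖iota m z‖ = ‖z‖ := by
  have h1 : ⟪iota m z, iota m z⟫ = ⟪z, z⟫ := by
    rw [inner_iota, iotaInv_iota]
  rw [real_inner_self_eq_norm_sq, real_inner_self_eq_norm_sq] at h1
  have := congrArg Real.sqrt h1
  rwa [Real.sqrt_sq (norm_nonneg _), Real.sqrt_sq (norm_nonneg _)] at this

lemma iotaInv_northPole : iotaInv m (northPole m) = 0 := by
  ext j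
  simp [iotaInv, northPole, EuclideanSpace.single_apply,
    (Fin.succAbove_ne (1 : Fin (m + 1)) j)]

lemma inner_northPole_iota (z : EuclideanSpace ℝ (Fin m)) :
    ⟪northPole m, iota m z⟫ = 0 := by
  rw [inner_iota, iotaInv_northPole, inner_zero_left]

lemma norm_expMu (z : EuclideanSpace ℝ (Fin m)) : ‖expMu m z‖ = 1 := by
  by_cases hz : z = 0
  · subst hz
    have : expMu m 0 = northPole m := by
      simp [expMu]
    rw [this, norm_northPole]
  · have hu : ‖z‖ ≠ 0 := norm_ne_zero_iff.mpr hz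
    have h2 : ‖expMu m z‖ ^ 2 = 1 := by
      rw [expMu, norm_add_sq_real, real_inner_smul_left, real_inner_smul_right,
        inner_northPole_iota, norm_smul, norm_smul, norm_northPole, norm_iota]
      have : (‖Real.sin ‖z‖ / ‖z‖‖ * ‖z‖) ^ 2 = Real.sin ‖z‖ ^ 2 := by
        rw [Real.norm_eq_abs, abs_div, abs_norm, div_mul_cancel₀ _ hu]
        rw [sq_abs]
      rw [this]
      have : (‖Real.cos ‖z‖‖ * 1) ^ 2 = Real.cos ‖z‖ ^ 2 := by
        rw [mul_one, Real.norm_eq_abs, sq_abs]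
      rw [this]
      have := Real.sin_sq_add_cos_sq ‖z‖
      ring_nf
      linarith
    rw [← Real.sqrt_sq (norm_nonneg (expMu m z)), h2, Real.sqrt_one]

lemma abs_sin_sub_le {u : ℝ} (h0 : 0 ≤ u) (h1 : u ≤ 1) : |Real.sin u - u| ≤ u ^ 3 / 4 := by
  rcases eq_or_lt_of_le h0 with h | h
  · simp [← h]
  · have hlt := Real.sin_lt h
    have hgt := Real.sin_gt_sub_cube h
    rw [abs_le]
    constructor <;> nlinarith [pow_pos h 3]

lemma one_sub_cos_le (u : ℝ) : 1 - Real.cos u ≤ u ^ 2 / 2 := by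
  have h1 := Real.cos_sq (u / 2)
  have h2 : 2 * (u / 2) = u := by ring
  rw [h2] at h1
  have h3 := Real.sin_sq_le_sq (x := u / 2)
  have h4 := Real.sin_sq_add_cos_sq (u / 2)
  nlinarith

set_option maxHeartbeats 1000000 in
set_option synthInstance.maxHeartbeats 1000000 in
lemma key_lemma (m : ℕ) (y : EuclideanSpace ℝ (Fin (m + 1)))
    (z : EuclideanSpace ℝ (Fin m)) :
    ∃ L : EuclideanSpace ℝ (Fin m) →L[ℝ] ℝ,
      HasFDerivAt (fun z' => (⟪y, expMu m z'⟫ : ℝ)) L z ∧ ‖L‖ ≤ 4 * ‖y‖ := by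
  set a : ℝ := ⟪y, northPole m⟫ with ha
  set w : EuclideanSpace ℝ (Fin m) := iotaInv m y with hw
  have hform : ∀ v : EuclideanSpace ℝ (Fin m),
      (⟪y, expMu m v⟫ : ℝ) = a * Real.cos ‖v‖ + Real.sin ‖v‖ * ‖v‖⁻¹ * ⟪w, v⟫ := by
    intro v
    rw [expMu, inner_add_right, real_inner_smul_right, real_inner_smul_right, inner_iota,
      div_eq_mul_inv]
    ring
  have hanorm : |a| ≤ ‖y‖ := by
    calc |a| ≤ ‖y‖ * ‖northPole m‖ := abs_real_inner_le_norm y (northPole m)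
    _ = ‖y‖ := by rw [norm_northPole, mul_one]
  have hwnorm : ‖w‖ ≤ ‖y‖ := norm_iotaInv_le y
  by_cases hz : z = 0
  · -- point 0 : derivative is innerSL ℝ w
    subst hz
    refine ⟨innerSL ℝ w, ?_, ?_⟩
    · rw [hasFDerivAt_iff_isLittleO_nhds_zero]
      have hbig : (fun h : EuclideanSpace ℝ (Fin m) =>
          (⟪y, expMu m (0 + h)⟫ : ℝ) - ⟪y, expMu m 0⟫ - innerSL ℝ w h)
          =O[nhds 0] fun h => ‖h‖ ^ 2 := by
        apply Asymptotics.IsBigO.of_bound (|a| / 2 + ‖w‖ / 4)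
        filter_upwards [Metric.ball_mem_nhds (0 : EuclideanSpace ℝ (Fin m)) one_pos] with h hh
        rw [mem_ball_zero_iff] at hh
        rw [zero_add, hform, hform]
        simp only [norm_zero, Real.cos_zero, inner_zero_right, mul_zero, add_zero, mul_one,
          innerSL_apply_apply]
        rcases eq_or_ne h 0 with rfl | hne
        · simp
        · set u := ‖h‖ with hu
          have hu0 : 0 < u := norm_pos_iff.mpr hne
          have key : a * Real.cos u + Real.sin u * u⁻¹ * ⟪w, h⟫ - a - ⟪w, h⟫
              = a * (Real.cos u - 1) + ((Real.sin u - u) * u⁻¹) * ⟪w, h⟫ := by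
            field_simp
            ring
          rw [key]
          have hwh : |(⟪w, h⟫ : ℝ)| ≤ ‖w‖ * u := abs_real_inner_le_norm w h
          have h1 : |a * (Real.cos u - 1)| ≤ |a| / 2 * u ^ 2 := by
            rw [abs_mul]
            have hc : |Real.cos u - 1| ≤ u ^ 2 / 2 := by
              rw [abs_sub_comm, abs_of_nonneg (by nlinarith [Real.cos_le_one u])]
              exact one_sub_cos_le u
            calc |a| * |Real.cos u - 1| ≤ |a| * (u ^ 2 / 2) :=
                  mul_le_mul_of_nonneg_left hc (abs_nonneg a)
            _ = |a| / 2 * u ^ 2 := by ring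
          have h2 : |((Real.sin u - u) * u⁻¹) * ⟪w, h⟫| ≤ ‖w‖ / 4 * u ^ 2 := by
            rw [abs_mul, abs_mul]
            have hs : |Real.sin u - u| ≤ u ^ 3 / 4 := abs_sin_sub_le hu0.le hh.le
            have hss : |Real.sin u - u| * |u⁻¹| ≤ u ^ 2 / 4 := by
              rw [abs_of_nonneg (inv_nonneg.mpr hu0.le)]
              calc |Real.sin u - u| * u⁻¹ ≤ u ^ 3 / 4 * u⁻¹ :=
                    mul_le_mul_of_nonneg_right hs (inv_nonneg.mpr hu0.le)
              _ = u ^ 2 / 4 := by field_simp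
            calc |Real.sin u - u| * |u⁻¹| * |(⟪w, h⟫ : ℝ)|
                ≤ u ^ 2 / 4 * (‖w‖ * u) :=
                  mul_le_mul hss hwh (abs_nonneg _) (by positivity)
            _ = ‖w‖ / 4 * u ^ 2 * u := by ring
            _ ≤ ‖w‖ / 4 * u ^ 2 * 1 :=
                  mul_le_mul_of_nonneg_left hh.le (by positivity)
            _ = ‖w‖ / 4 * u ^ 2 := mul_one _
          calc ‖a * (Real.cos u - 1) + ((Real.sin u - u) * u⁻¹) * ⟪w, h⟫‖
              ≤ |a * (Real.cos u - 1)| + |((Real.sin u - u) * u⁻¹) * ⟪w, h⟫| :=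
                abs_add_le _ _
          _ ≤ |a| / 2 * u ^ 2 + ‖w‖ / 4 * u ^ 2 := add_le_add h1 h2
          _ = (|a| / 2 + ‖w‖ / 4) * ‖(u : ℝ) ^ 2‖ := by
                rw [Real.norm_eq_abs, abs_pow, abs_of_nonneg hu0.le]; ring
      exact hbig.trans_isLittleO (Asymptotics.isLittleO_norm_pow_id one_lt_two)
    · rw [innerSL_apply_norm]
      nlinarith [norm_nonneg y]
  · -- point z ≠ 0
    have hu : ‖z‖ ≠ 0 := norm_ne_zero_iff.mpr hz
    have hu0 : 0 < ‖z‖ := norm_pos_iff.mpr hz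
    have hQ : HasFDerivAt (fun z' : EuclideanSpace ℝ (Fin m) => (⟪z', z'⟫ : ℝ))
        ((2 : ℝ) • innerSL ℝ z) z := by
      have h0 := HasFDerivAt.inner (𝕜 := ℝ) (hasFDerivAt_id z) (hasFDerivAt_id z)
      refine h0.congr_fderiv ?_
      ext h
      simp only [ContinuousLinearMap.comp_apply, fderivInnerCLM_apply,
        ContinuousLinearMap.prod_apply, ContinuousLinearMap.coe_id', id_eq,
        ContinuousLinearMap.smul_apply, innerSL_apply_apply, smul_eq_mul]
      rw [real_inner_comm h z]
      ring
    have hinnz : (⟪z, z⟫ : ℝ) ≠ 0 := by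
      rw [real_inner_self_eq_norm_sq]; positivity
    have hsq := (Real.hasDerivAt_sqrt hinnz).comp_hasFDerivAt_of_eq z hQ rfl
    set R : EuclideanSpace ℝ (Fin m) →L[ℝ] ℝ := ‖z‖⁻¹ • innerSL ℝ z with hR
    have hr : HasFDerivAt (fun z' : EuclideanSpace ℝ (Fin m) => ‖z'‖) R z := by
      have hfun : (fun z' : EuclideanSpace ℝ (Fin m) => Real.sqrt ⟪z', z'⟫)
          = fun z' : EuclideanSpace ℝ (Fin m) => ‖z'‖ := by
        funext v
        rw [real_inner_self_eq_norm_sq, Real.sqrt_sq (norm_nonneg v)]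
      simp only [Function.comp_def] at hsq
      rw [hfun] at hsq
      refine hsq.congr_fderiv ?_
      rw [real_inner_self_eq_norm_sq, Real.sqrt_sq (norm_nonneg z)]
      ext h
      simp only [hR, ContinuousLinearMap.coe_smul', Pi.smul_apply, smul_eq_mul,
        ContinuousLinearMap.smul_apply]
      field_simp
    have hcos := (Real.hasDerivAt_cos ‖z‖).comp_hasFDerivAt_of_eq z hr rfl
    have hsin := (Real.hasDerivAt_sin ‖z‖).comp_hasFDerivAt_of_eq z hr rfl
    have hinv := (hasDerivAt_inv hu).comp_hasFDerivAt_of_eq z hr rfl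
    have hb : HasFDerivAt (fun z' : EuclideanSpace ℝ (Fin m) => (⟪w, z'⟫ : ℝ))
        (innerSL ℝ w) z := (innerSL ℝ w).hasFDerivAt
    have hfull := (hcos.const_mul a).add ((hsin.mul hinv).mul hb)
    set α : ℝ := -(a * Real.sin ‖z‖) * ‖z‖⁻¹ +
        ⟪w, z⟫ * (‖z‖ * Real.cos ‖z‖ - Real.sin ‖z‖) * (‖z‖ ^ 3)⁻¹ with hα
    set β : ℝ := Real.sin ‖z‖ * ‖z‖⁻¹ with hβ
    set M : EuclideanSpace ℝ (Fin m) →L[ℝ] ℝ := α • innerSL ℝ z + β • innerSL ℝ w with hM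
    have hfull' : HasFDerivAt
        (fun z' : EuclideanSpace ℝ (Fin m) =>
          a * Real.cos ‖z'‖ + Real.sin ‖z'‖ * ‖z'‖⁻¹ * ⟪w, z'⟫) M z := by
      apply hfull.congr_fderiv
      ext h
      simp only [hM, hα, hβ, hR, ContinuousLinearMap.add_apply, ContinuousLinearMap.smul_apply,
        ContinuousLinearMap.coe_smul', Pi.smul_apply, innerSL_apply_apply, smul_eq_mul,
        Function.comp_apply, Function.comp_def, Pi.mul_apply]
      field_simp
      ring
    refine ⟨M, ?_, ?_⟩
    · have heq : (fun z' : EuclideanSpace ℝ (Fin m) => (⟪y, expMu m z'⟫ : ℝ))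
          = fun z' => a * Real.cos ‖z'‖ + Real.sin ‖z'‖ * ‖z'‖⁻¹ * ⟪w, z'⟫ := funext hform
      rw [heq]
      exact hfull'
    · have hsle : |Real.sin ‖z‖| ≤ ‖z‖ := by
        calc |Real.sin ‖z‖| ≤ |‖z‖| := Real.abs_sin_le_abs
        _ = ‖z‖ := abs_of_nonneg hu0.le
      have hs1 : |Real.sin ‖z‖| ≤ 1 :=
        abs_le.mpr ⟨Real.neg_one_le_sin _, Real.sin_le_one _⟩
      have hc1 : |Real.cos ‖z‖| ≤ 1 :=
        abs_le.mpr ⟨Real.neg_one_le_cos _, Real.cos_le_one _⟩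
      have hwz : |(⟪w, z⟫ : ℝ)| ≤ ‖w‖ * ‖z‖ := abs_real_inner_le_norm w z
      have hMle : ‖M‖ ≤ |α| * ‖z‖ + |β| * ‖w‖ := by
        refine ContinuousLinearMap.opNorm_le_bound M (by positivity) fun h => ?_
        have happ : M h = α * ⟪z, h⟫ + β * ⟪w, h⟫ := by
          simp [hM, ContinuousLinearMap.add_apply, ContinuousLinearMap.smul_apply,
            innerSL_apply_apply, smul_eq_mul]
        have h1 : |α * ⟪z, h⟫| ≤ |α| * (‖z‖ * ‖h‖) := by
          rw [abs_mul]
          exact mul_le_mul_of_nonneg_left (abs_real_inner_le_norm z h) (abs_nonneg α)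
        have h2 : |β * ⟪w, h⟫| ≤ |β| * (‖w‖ * ‖h‖) := by
          rw [abs_mul]
          exact mul_le_mul_of_nonneg_left (abs_real_inner_le_norm w h) (abs_nonneg β)
        calc ‖M h‖ = |α * ⟪z, h⟫ + β * ⟪w, h⟫| := by rw [happ, Real.norm_eq_abs]
        _ ≤ |α * ⟪z, h⟫| + |β * ⟪w, h⟫| := abs_add_le _ _
        _ ≤ |α| * (‖z‖ * ‖h‖) + |β| * (‖w‖ * ‖h‖) := add_le_add h1 h2
        _ = (|α| * ‖z‖ + |β| * ‖w‖) * ‖h‖ := by ring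
      have hα1 : |α| * ‖z‖ ≤ |a| + 2 * ‖w‖ := by
        have habs : |α| ≤ |a * Real.sin ‖z‖| * ‖z‖⁻¹ +
            |(⟪w, z⟫ : ℝ)| * |‖z‖ * Real.cos ‖z‖ - Real.sin ‖z‖| * (‖z‖ ^ 3)⁻¹ := by
          calc |α| ≤ |(-(a * Real.sin ‖z‖)) * ‖z‖⁻¹| +
              |⟪w, z⟫ * (‖z‖ * Real.cos ‖z‖ - Real.sin ‖z‖) * (‖z‖ ^ 3)⁻¹| := abs_add_le _ _
          _ = |a * Real.sin ‖z‖| * ‖z‖⁻¹ +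
              |(⟪w, z⟫ : ℝ)| * |‖z‖ * Real.cos ‖z‖ - Real.sin ‖z‖| * (‖z‖ ^ 3)⁻¹ := by
              simp only [abs_mul, abs_neg, abs_inv, abs_pow, abs_norm]
        have hdiff : |‖z‖ * Real.cos ‖z‖ - Real.sin ‖z‖| ≤ 2 * ‖z‖ := by
          calc |‖z‖ * Real.cos ‖z‖ - Real.sin ‖z‖|
              ≤ |‖z‖ * Real.cos ‖z‖| + |Real.sin ‖z‖| := abs_sub _ _
          _ ≤ ‖z‖ * 1 + ‖z‖ := by
              rw [abs_mul, abs_of_nonneg hu0.le]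
              exact add_le_add (mul_le_mul_of_nonneg_left hc1 hu0.le) hsle
          _ = 2 * ‖z‖ := by ring
        have h1 : |a * Real.sin ‖z‖| * ‖z‖⁻¹ * ‖z‖ ≤ |a| := by
          rw [abs_mul, mul_assoc, inv_mul_cancel₀ hu, mul_one]
          calc |a| * |Real.sin ‖z‖| ≤ |a| * 1 :=
              mul_le_mul_of_nonneg_left hs1 (abs_nonneg a)
          _ = |a| := mul_one _
        have h2 : |(⟪w, z⟫ : ℝ)| * |‖z‖ * Real.cos ‖z‖ - Real.sin ‖z‖| * (‖z‖ ^ 3)⁻¹ * ‖z‖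
            ≤ 2 * ‖w‖ := by
          have : |(⟪w, z⟫ : ℝ)| * |‖z‖ * Real.cos ‖z‖ - Real.sin ‖z‖|
              ≤ (‖w‖ * ‖z‖) * (2 * ‖z‖) :=
            mul_le_mul hwz hdiff (abs_nonneg _) (by positivity)
          calc |(⟪w, z⟫ : ℝ)| * |‖z‖ * Real.cos ‖z‖ - Real.sin ‖z‖| * (‖z‖ ^ 3)⁻¹ * ‖z‖
              ≤ (‖w‖ * ‖z‖) * (2 * ‖z‖) * (‖z‖ ^ 3)⁻¹ * ‖z‖ := by
                apply mul_le_mul_of_nonneg_right _ hu0.le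
                exact mul_le_mul_of_nonneg_right this (by positivity)
          _ = 2 * ‖w‖ := by field_simp
        calc |α| * ‖z‖ ≤ (|a * Real.sin ‖z‖| * ‖z‖⁻¹ +
            |(⟪w, z⟫ : ℝ)| * |‖z‖ * Real.cos ‖z‖ - Real.sin ‖z‖| * (‖z‖ ^ 3)⁻¹) * ‖z‖ :=
              mul_le_mul_of_nonneg_right habs hu0.le
        _ = |a * Real.sin ‖z‖| * ‖z‖⁻¹ * ‖z‖ +
            |(⟪w, z⟫ : ℝ)| * |‖z‖ * Real.cos ‖z‖ - Real.sin ‖z‖| * (‖z‖ ^ 3)⁻¹ * ‖z‖ := by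
              ring
        _ ≤ |a| + 2 * ‖w‖ := add_le_add h1 h2
      have hβ1 : |β| ≤ 1 := by
        rw [hβ, abs_mul, abs_of_nonneg (inv_nonneg.mpr hu0.le)]
        calc |Real.sin ‖z‖| * ‖z‖⁻¹ ≤ ‖z‖ * ‖z‖⁻¹ :=
            mul_le_mul_of_nonneg_right hsle (inv_nonneg.mpr hu0.le)
        _ = 1 := mul_inv_cancel₀ hu
      have hβ2 : |β| * ‖w‖ ≤ ‖w‖ := by
        calc |β| * ‖w‖ ≤ 1 * ‖w‖ := mul_le_mul_of_nonneg_right hβ1 (norm_nonneg w)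
        _ = ‖w‖ := one_mul _
      calc ‖M‖ ≤ |α| * ‖z‖ + |β| * ‖w‖ := hMle
      _ ≤ (|a| + 2 * ‖w‖) + ‖w‖ := add_le_add hα1 hβ2
      _ ≤ 4 * ‖y‖ := by nlinarith

lemma arccos_le_sqrt {t : ℝ} (h1 : -1 ≤ t) (h2 : t ≤ 1) :
    Real.arccos t ≤ Real.pi * Real.sqrt ((1 - t) / 2) := by
  have hu0 : 0 ≤ Real.arccos t := Real.arccos_nonneg t
  have hupi : Real.arccos t ≤ Real.pi := Real.arccos_le_pi t
  have hcos : Real.cos (Real.arccos t) = t := Real.cos_arccos h1 h2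
  have hhalf := Real.sin_half_eq_sqrt hu0 (by linarith [Real.pi_pos])
  rw [hcos] at hhalf
  have hjord := Real.mul_le_sin (x := Real.arccos t / 2) (by linarith) (by linarith)
  rw [hhalf] at hjord
  have hpi := Real.pi_pos
  have heq : Real.pi * (2 / Real.pi * (Real.arccos t / 2)) = Real.arccos t := by
    field_simp
  have hmul := mul_le_mul_of_nonneg_left hjord hpi.le
  linarith

lemma arccos_sq_le {t : ℝ} (h1 : -1 ≤ t) (h2 : t ≤ 1) :
    Real.arccos t ^ 2 ≤ Real.pi ^ 2 / 2 * (1 - t) := by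
  have h := arccos_le_sqrt h1 h2
  have h0 : 0 ≤ Real.arccos t := Real.arccos_nonneg t
  have hsq : (Real.pi * Real.sqrt ((1 - t) / 2)) ^ 2 = Real.pi ^ 2 / 2 * (1 - t) := by
    rw [mul_pow, Real.sq_sqrt (by linarith : (0:ℝ) ≤ (1 - t) / 2)]
    ring
  calc Real.arccos t ^ 2 ≤ (Real.pi * Real.sqrt ((1 - t) / 2)) ^ 2 :=
        pow_le_pow_left₀ h0 h 2
  _ = Real.pi ^ 2 / 2 * (1 - t) := hsq

end Stmt13Aux

end AuxStmt13

/-- Lemma 4: for every `x ∈ S^m`, the function `z ↦ arccos⟨x, exp_μ(z)⟩²` is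
differentiable at every `z` with `‖z‖ < π` and `exp_μ(z) ≠ -x`, its gradient is
`-2 (grad_z ⟨x, exp_μ(z)⟩ / √(1-⟨x, exp_μ(z)⟩²)) arccos⟨x, exp_μ(z)⟩`, and this
gradient is uniformly bounded on the whole domain by some constant `C`. -/
theorem stmt_13 (m : ℕ) (hm : 2 ≤ m)
    (x : EuclideanSpace ℝ (Fin (m + 1))) (hx : ‖x‖ = 1) :
    ∃ C : ℝ, ∀ z : EuclideanSpace ℝ (Fin m), ‖z‖ < Real.pi → expMu m z ≠ -x →
      ∃ gi : EuclideanSpace ℝ (Fin m),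
        HasGradientAt (fun z' => ⟪x, expMu m z'⟫) gi z ∧
        HasGradientAt (fun z' => Real.arccos ⟪x, expMu m z'⟫ ^ 2)
          ((-2 * Real.arccos ⟪x, expMu m z⟫ /
              Real.sqrt (1 - ⟪x, expMu m z⟫ ^ 2)) • gi) z ∧
        ‖(-2 * Real.arccos ⟪x, expMu m z⟫ /
            Real.sqrt (1 - ⟪x, expMu m z⟫ ^ 2)) • gi‖ ≤ C := by
  classical
  refine ⟨8 * Real.pi, ?_⟩
  intro z hzpi hne
  set p : EuclideanSpace ℝ (Fin (m + 1)) := expMu m z with hp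
  have hpnorm : ‖p‖ = 1 := Stmt13Aux.norm_expMu z
  obtain ⟨M, hM, hMb⟩ := Stmt13Aux.key_lemma m (x + p) z
  obtain ⟨N, hN, -⟩ := Stmt13Aux.key_lemma m p z
  have hpeq : (⟪p, expMu m z⟫ : ℝ) = 1 := by
    rw [← hp, real_inner_self_eq_norm_sq, hpnorm, one_pow]
  have hmax : IsLocalMax (fun z' => (⟪p, expMu m z'⟫ : ℝ)) z := by
    apply Filter.Eventually.of_forall
    intro z'
    show (⟪p, expMu m z'⟫ : ℝ) ≤ ⟪p, expMu m z⟫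
    rw [hpeq]
    calc (⟪p, expMu m z'⟫ : ℝ) ≤ ‖p‖ * ‖expMu m z'‖ := real_inner_le_norm _ _
    _ = 1 := by rw [hpnorm, Stmt13Aux.norm_expMu, mul_one]
  have hN0 : N = 0 := hmax.hasFDerivAt_eq_zero hN
  have hsub := hM.sub hN
  rw [hN0, sub_zero] at hsub
  have hfx : HasFDerivAt (fun z' => (⟪x, expMu m z'⟫ : ℝ)) M z := by
    have heq : (fun z' => (⟪x + p, expMu m z'⟫ : ℝ) - ⟪p, expMu m z'⟫)
        = fun z' => (⟪x, expMu m z'⟫ : ℝ) := by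
      funext v
      rw [inner_add_left]
      ring
    rw [← heq]; exact hsub
  set t : ℝ := ⟪x, p⟫ with htdef
  have ht1 : t ≤ 1 := by
    rw [htdef, hp]
    calc (⟪x, expMu m z⟫ : ℝ) ≤ ‖x‖ * ‖expMu m z‖ := real_inner_le_norm _ _
    _ = 1 := by rw [hx, Stmt13Aux.norm_expMu, mul_one]
  have htm : -1 ≤ t := by
    have habs : |(⟪x, p⟫ : ℝ)| ≤ ‖x‖ * ‖p‖ := abs_real_inner_le_norm x p
    rw [hx, hpnorm, mul_one] at habs
    have := (abs_le.mp habs).1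
    rw [← htdef] at this
    exact this
  have hxp2 : ‖x + p‖ ^ 2 = 2 + 2 * t := by
    rw [norm_add_sq_real, hx, hpnorm, ← htdef]
    ring
  have htne : t ≠ -1 := by
    intro h
    have h0 : ‖x + p‖ ^ 2 = 0 := by rw [hxp2, h]; ring
    have hxp0 : x + p = 0 :=
      norm_eq_zero.mp (sq_eq_zero_iff.mp h0)
    exact hne (eq_neg_of_add_eq_zero_right hxp0)
  set gi : EuclideanSpace ℝ (Fin m) :=
    (InnerProductSpace.toDual ℝ (EuclideanSpace ℝ (Fin m))).symm M with hgidef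
  have hgrad : HasGradientAt (fun z' => (⟪x, expMu m z'⟫ : ℝ)) gi z :=
    hasFDerivAt_iff_hasGradientAt.mp hfx
  have hginorm : ‖gi‖ = ‖M‖ := LinearIsometryEquiv.norm_map _ M
  refine ⟨gi, hgrad, ?_, ?_⟩
  · -- gradient of the squared arccos
    by_cases hteq : t = 1
    · -- p = x : maximum point, gradient zero
      have hpx : x = p := by
        have hsubsq : ‖x - p‖ ^ 2 = 0 := by
          rw [norm_sub_sq_real, hx, hpnorm, ← htdef, hteq]
          ring
        have := norm_eq_zero.mp (sq_eq_zero_iff.mp hsubsq)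
        exact sub_eq_zero.mp this
      have hM0 : M = 0 := by
        have hN' : HasFDerivAt (fun z' => (⟪x, expMu m z'⟫ : ℝ)) N z := by
          rw [hpx]
          exact hN
        rw [hfx.unique hN', hN0]
      have hgi0 : gi = 0 := by rw [hgidef, hM0, map_zero]
      rw [hgi0, smul_zero]
      have hF : HasFDerivAt (fun z' => Real.arccos (⟪x, expMu m z'⟫ : ℝ) ^ 2)
          (0 : EuclideanSpace ℝ (Fin m) →L[ℝ] ℝ) z := by
        rw [hasFDerivAt_iff_isLittleO_nhds_zero]
        have hlit : (fun h : EuclideanSpace ℝ (Fin m) =>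
            (⟪x, expMu m (z + h)⟫ : ℝ) - ⟪x, expMu m z⟫) =o[nhds 0]
            fun h => h := by
          rw [hM0] at hfx
          rw [hasFDerivAt_iff_isLittleO_nhds_zero] at hfx
          simpa using hfx
        have hbig : (fun h : EuclideanSpace ℝ (Fin m) =>
            Real.arccos (⟪x, expMu m (z + h)⟫ : ℝ) ^ 2 -
              Real.arccos (⟪x, expMu m z⟫ : ℝ) ^ 2 -
              (0 : EuclideanSpace ℝ (Fin m) →L[ℝ] ℝ) h) =O[nhds 0]
            fun h : EuclideanSpace ℝ (Fin m) =>
              (⟪x, expMu m (z + h)⟫ : ℝ) - ⟪x, expMu m z⟫ := by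
          apply Asymptotics.IsBigO.of_bound (Real.pi ^ 2 / 2)
          apply Filter.Eventually.of_forall
          intro h
          have hz1 : (⟪x, expMu m z⟫ : ℝ) = 1 := by rw [← hp, ← htdef, hteq]
          set s : ℝ := ⟪x, expMu m (z + h)⟫ with hsdef
          have hs1 : s ≤ 1 := by
            rw [hsdef]
            calc (⟪x, expMu m (z + h)⟫ : ℝ) ≤ ‖x‖ * ‖expMu m (z + h)‖ :=
                real_inner_le_norm _ _
            _ = 1 := by rw [hx, Stmt13Aux.norm_expMu, mul_one]
          have hsm : -1 ≤ s := by
            have habs : |(⟪x, expMu m (z + h)⟫ : ℝ)| ≤ ‖x‖ * ‖expMu m (z + h)‖ :=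
              abs_real_inner_le_norm _ _
            rw [hx, Stmt13Aux.norm_expMu, mul_one] at habs
            have := (abs_le.mp habs).1
            rwa [← hsdef] at this
          rw [hz1, Real.arccos_one]
          simp only [ContinuousLinearMap.zero_apply, sub_zero, ne_eq,
            OfNat.ofNat_ne_zero, not_false_eq_true, zero_pow]
          rw [Real.norm_eq_abs, Real.norm_eq_abs,
            abs_of_nonneg (sq_nonneg _), abs_of_nonpos (by linarith : s - 1 ≤ 0)]
          have := Stmt13Aux.arccos_sq_le hsm hs1
          calc Real.arccos s ^ 2 ≤ Real.pi ^ 2 / 2 * (1 - s) := this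
          _ = Real.pi ^ 2 / 2 * -(s - 1) := by ring
        exact hbig.trans_isLittleO hlit
      have := hasFDerivAt_iff_hasGradientAt.mp hF
      rwa [map_zero] at this
    · -- interior case
      have htlt : t < 1 := lt_of_le_of_ne ht1 hteq
      have hd := (Real.hasDerivAt_arccos htne hteq).pow 2
      have hcomp := hd.comp_hasFDerivAt_of_eq z hfx rfl
      have hg2 := hasFDerivAt_iff_hasGradientAt.mp hcomp
      have heqg : (InnerProductSpace.toDual ℝ (EuclideanSpace ℝ (Fin m))).symm
          ((((2 : ℕ) : ℝ) * Real.arccos t ^ (2 - 1) * -(1 / Real.sqrt (1 - t ^ 2))) • M)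
          = (-2 * Real.arccos t / Real.sqrt (1 - t ^ 2)) • gi := by
        rw [LinearIsometryEquiv.map_smul, hgidef]
        congr 1
        push_cast
        ring
      rw [heqg] at hg2
      exact hg2
  · -- the bound
    by_cases hteq : t = 1
    · have hpx : x = p := by
        have hsubsq : ‖x - p‖ ^ 2 = 0 := by
          rw [norm_sub_sq_real, hx, hpnorm, ← htdef, hteq]
          ring
        have := norm_eq_zero.mp (sq_eq_zero_iff.mp hsubsq)
        exact sub_eq_zero.mp this
      have hM0 : M = 0 := by
        have hN' : HasFDerivAt (fun z' => (⟪x, expMu m z'⟫ : ℝ)) N z := by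
          rw [hpx]
          exact hN
        rw [hfx.unique hN', hN0]
      have hgi0 : gi = 0 := by rw [hgidef, hM0, map_zero]
      rw [hgi0, smul_zero, norm_zero]
      positivity
    · have htlt : t < 1 := lt_of_le_of_ne ht1 hteq
      have htgt : -1 < t := lt_of_le_of_ne htm (Ne.symm htne)
      have h1t : (0:ℝ) < 1 - t := by linarith
      have h1t' : (0:ℝ) < 1 + t := by linarith
      have hs2 : (0:ℝ) < Real.sqrt 2 := Real.sqrt_pos.mpr two_pos
      have hsa : (0:ℝ) < Real.sqrt (1 - t) := Real.sqrt_pos.mpr h1t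
      have hsb : (0:ℝ) < Real.sqrt (1 + t) := Real.sqrt_pos.mpr h1t'
      have hss : Real.sqrt (1 - t ^ 2) = Real.sqrt (1 - t) * Real.sqrt (1 + t) := by
        rw [show (1:ℝ) - t ^ 2 = (1 - t) * (1 + t) by ring, Real.sqrt_mul h1t.le]
      have hspos : (0:ℝ) < Real.sqrt (1 - t ^ 2) := by
        rw [hss]; positivity
      have hxp : ‖x + p‖ = Real.sqrt 2 * Real.sqrt (1 + t) := by
        rw [← Real.sqrt_sq (norm_nonneg (x + p)), hxp2,
          show (2:ℝ) + 2 * t = 2 * (1 + t) by ring, Real.sqrt_mul (by norm_num : (0:ℝ) ≤ 2)]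
      have hcoeff : |(-2 * Real.arccos t / Real.sqrt (1 - t ^ 2))|
          = 2 * Real.arccos t / Real.sqrt (1 - t ^ 2) := by
        rw [abs_div, abs_of_nonneg hspos.le, abs_mul, abs_neg]
        rw [abs_of_nonneg (Real.arccos_nonneg t)]
        norm_num
      rw [norm_smul, Real.norm_eq_abs, hcoeff, hginorm]
      have harc : Real.arccos t ≤ Real.pi * (Real.sqrt (1 - t) / Real.sqrt 2) := by
        have h := Stmt13Aux.arccos_le_sqrt htm ht1
        rwa [Real.sqrt_div h1t.le] at h
      calc 2 * Real.arccos t / Real.sqrt (1 - t ^ 2) * ‖M‖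
          ≤ 2 * (Real.pi * (Real.sqrt (1 - t) / Real.sqrt 2)) / Real.sqrt (1 - t ^ 2) *
            (4 * ‖x + p‖) := by
            apply mul_le_mul _ hMb (norm_nonneg M) (by positivity)
            exact (div_le_div_iff_of_pos_right hspos).mpr (by linarith)
      _ = 8 * Real.pi := by
            rw [hss, hxp]
            field_simp
            ring
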